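/- For every n > 0 and all convex subsets x, y_1, …, y_{n+1} of ℝⁿ each containing the origin 0, the relation D_n(x, y_1, …, y_{n+1}) holds, i.e. x ∩ convexHull(⋃_{i=1}^{n+1} y_i) = convexHull(⋃_{i=1}^{n+1} (x ∩ convexHull(⋃_{j≠i} y_j))). (Thus the lattice Conv(ℝⁿ)_{≥{0}} of convex sets containing 0 satisfies the identity D_n.) -/

import Mathlib

/-- For every `n > 0` and all convex subsets `x, y₁, …, y_{n+1}` of `ℝⁿ` each containing the
origin, the relation `D_n(x, y₁, …, y_{n+1})` holds; thus `Conv(ℝⁿ)_{≥{0}}` satisfies `D_n`. -/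
theorem conv_ge_zero_Dn (n : ℕ) (hn : 0 < n) (x : Set (Fin n → ℝ))
    (y : Fin (n + 1) → Set (Fin n → ℝ))
    (hx : Convex ℝ x) (hy : ∀ i, Convex ℝ (y i))
    (hx0 : (0 : Fin n → ℝ) ∈ x) (hy0 : ∀ i, (0 : Fin n → ℝ) ∈ y i) :
    x ∩ convexHull ℝ (⋃ i, y i) =
      convexHull ℝ (⋃ i, x ∩ convexHull ℝ (⋃ j, ⋃ (_ : j ≠ i), y j)) := by
  classical
  apply Set.Subset.antisymm
  · -- hard direction
    rintro p ⟨hpx, hph⟩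
    rw [convexHull_eq_union] at hph
    simp only [Set.mem_iUnion] at hph
    obtain ⟨t, hts, hai, hpt⟩ := hph
    suffices h : ∃ i, p ∈ convexHull ℝ (⋃ j, ⋃ (_ : j ≠ i), y j) by
      obtain ⟨i, hi⟩ := h
      exact subset_convexHull ℝ _ (Set.mem_iUnion.2 ⟨i, hpx, hi⟩)
    by_cases hcase : ∃ i, (↑t : Set (Fin n → ℝ)) ⊆ ⋃ j, ⋃ (_ : j ≠ i), y j
    · obtain ⟨i, hi⟩ := hcase
      exact ⟨i, convexHull_mono hi hpt⟩
    push_neg at hcase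
    choose f hft hfy using fun i => Set.not_subset.1 (hcase i)
    -- each f i lies in y i and in no other piece's union
    have hfy' : ∀ i, f i ∈ y i := by
      intro i
      obtain ⟨j, hj⟩ := Set.mem_iUnion.1 (hts (hft i))
      rcases eq_or_ne j i with rfl | hne
      · exact hj
      · exact absurd (Set.mem_iUnion.2 ⟨j, Set.mem_iUnion.2 ⟨hne, hj⟩⟩) (hfy i)
    have hfinj : Function.Injective f := by
      intro i i' h
      by_contra hne
      obtain ⟨j, hj⟩ := Set.mem_iUnion.1 (hts (hft i))
      rcases eq_or_ne j i with rfl | hne'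
      · exact hfy i' (Set.mem_iUnion.2 ⟨j, Set.mem_iUnion.2 ⟨fun hh => hne (hh ▸ rfl), h ▸ hj⟩⟩)
      · exact hfy i (Set.mem_iUnion.2 ⟨j, Set.mem_iUnion.2 ⟨hne', hj⟩⟩)
    -- cardinality of t is exactly n + 1
    have hg : Function.Injective (fun i : Fin (n + 1) => (⟨f i, hft i⟩ : ↥t)) := by
      intro i i' h
      exact hfinj (congrArg Subtype.val h)
    have hcard_ge : n + 1 ≤ t.card := by
      have := Fintype.card_le_of_injective _ hg
      simpa [Fintype.card_coe] using this
    have hcard_le : t.card ≤ n + 1 := by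
      have h1 := hai.card_le_finrank_succ
      have h2 := Submodule.finrank_le
        (vectorSpan ℝ (Set.range ((↑) : ↥t → (Fin n → ℝ))))
      rw [Fintype.card_coe] at h1
      simp only [Module.finrank_fin_fun] at h2
      omega
    have hcard : t.card = n + 1 := le_antisymm hcard_le hcard_ge
    -- t affinely spans the whole space, hence 0 is an affine combination of t
    have htop : affineSpan ℝ (Set.range ((↑) : ↥t → (Fin n → ℝ))) = ⊤ :=
      hai.affineSpan_eq_top_iff_card_eq_finrank_add_one.2
        (by rw [Fintype.card_coe, hcard, Module.finrank_fin_fun])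
    have h0span : (0 : Fin n → ℝ) ∈ affineSpan ℝ (Set.range ((↑) : ↥t → (Fin n → ℝ))) := by
      rw [htop]; trivial
    obtain ⟨ν, hν1, hν0⟩ := eq_affineCombination_of_mem_affineSpan_of_fintype h0span
    rw [Finset.affineCombination_eq_linear_combination _ _ _ hν1] at hν0
    -- transfer ν to a weight function on the ambient space
    set ν' : (Fin n → ℝ) → ℝ := fun q => if h : q ∈ t then ν ⟨q, h⟩ else 0 with hν'def
    have hν'1 : ∑ q ∈ t, ν' q = 1 := by
      rw [← hν1, ← Finset.sum_attach t ν']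
      exact Finset.sum_congr rfl fun i _ => by simp [hν'def, i.2]
    have hν'0 : ∑ q ∈ t, ν' q • q = (0 : Fin n → ℝ) := by
      rw [← Finset.sum_attach t (fun q => ν' q • q)]
      rw [show ∑ i ∈ t.attach, ν' ↑i • (i : Fin n → ℝ)
            = ∑ i : ↥t, ν i • (i : Fin n → ℝ) from
        Finset.sum_congr rfl fun i _ => by simp [hν'def, i.2]]
      exact hν0.symm
    -- weights for p
    rw [Finset.convexHull_eq] at hpt
    obtain ⟨lam, hlam0, hlam1, hlamc⟩ := hpt
    rw [Finset.centerMass_eq_of_sum_1 _ _ hlam1] at hlamc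
    simp only [id] at hlamc
    -- pick the minimizing ratio
    have hSne : (t.filter fun q => 0 < ν' q).Nonempty := by
      by_contra hemp
      rw [Finset.not_nonempty_iff_eq_empty] at hemp
      have hle : ∀ q ∈ t, ν' q ≤ 0 := by
        intro q hq
        by_contra hpos
        have : q ∈ t.filter fun q => 0 < ν' q :=
          Finset.mem_filter.2 ⟨hq, lt_of_not_ge hpos⟩
        simp [hemp] at this
      have := Finset.sum_nonpos hle
      rw [hν'1] at this
      linarith
    obtain ⟨q0, hq0S, hq0min⟩ :=
      (t.filter fun q => 0 < ν' q).exists_min_image (fun q => lam q / ν' q) hSne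
    obtain ⟨hq0t, hq0pos⟩ := Finset.mem_filter.1 hq0S
    set τ : ℝ := lam q0 / ν' q0 with hτdef
    have hτ0 : 0 ≤ τ := div_nonneg (hlam0 q0 hq0t) hq0pos.le
    set c : (Fin n → ℝ) → ℝ := fun q => lam q - τ * ν' q with hcdef
    have hc0 : ∀ q ∈ t, 0 ≤ c q := by
      intro q hq
      rcases le_or_gt (ν' q) 0 with hle | hpos
      · have : τ * ν' q ≤ 0 := mul_nonpos_of_nonneg_of_nonpos hτ0 hle
        have := hlam0 q hq
        simp only [hcdef]
        linarith
      · have hmin := hq0min q (Finset.mem_filter.2 ⟨hq, hpos⟩)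
        rw [div_le_div_iff₀ hq0pos hpos] at hmin
        have : τ * ν' q ≤ lam q := by
          rw [hτdef, div_mul_eq_mul_div, div_le_iff₀ hq0pos]
          linarith [hmin]
        simp only [hcdef]
        linarith
    have hcq0 : c q0 = 0 := by
      simp only [hcdef, hτdef]
      field_simp; ring
    have hcsum : ∑ q ∈ t, c q = 1 - τ := by
      simp only [hcdef, Finset.sum_sub_distrib, ← Finset.mul_sum, hν'1, hlam1, mul_one]
    have hcvec : ∑ q ∈ t, c q • q = p := by
      simp only [hcdef, sub_smul, Finset.sum_sub_distrib, mul_smul, ← Finset.smul_sum,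
        hν'0, hlamc, smul_zero, sub_zero]
    -- identify the index dropped
    have hgbij : Function.Bijective (fun i : Fin (n + 1) => (⟨f i, hft i⟩ : ↥t)) := by
      rw [Fintype.bijective_iff_injective_and_card]
      exact ⟨hg, by simp [Fintype.card_coe, hcard]⟩
    obtain ⟨i0, hi0⟩ := hgbij.2 ⟨q0, hq0t⟩
    refine ⟨i0, ?_⟩
    set S0 : Set (Fin n → ℝ) := ⋃ j, ⋃ (_ : j ≠ i0), y j with hS0def
    have h0S0 : (0 : Fin n → ℝ) ∈ S0 := by
      obtain ⟨j, hj⟩ := Fintype.exists_ne_of_one_lt_card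
        (by simpa using (by omega : 1 < n + 1)) i0
      exact Set.mem_iUnion.2 ⟨j, Set.mem_iUnion.2 ⟨hj, hy0 j⟩⟩
    have hqS0 : ∀ q ∈ t, q ≠ q0 → q ∈ S0 := by
      intro q hq hne
      obtain ⟨j, hj⟩ := hgbij.2 ⟨q, hq⟩
      have hjq : f j = q := congrArg Subtype.val hj
      have hjne : j ≠ i0 := by
        intro hc
        subst hc
        rw [hi0] at hj
        exact hne (congrArg Subtype.val hj).symm
      exact Set.mem_iUnion.2 ⟨j, Set.mem_iUnion.2 ⟨hjne, hjq ▸ hfy' j⟩⟩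
    -- write p as a convex combination inside convexHull S0
    set w : (Fin n → ℝ) → ℝ := Function.update c q0 τ with hwdef
    set z : (Fin n → ℝ) → (Fin n → ℝ) := Function.update id q0 0 with hzdef
    have hsum_w : ∑ q ∈ t, w q = 1 := by
      rw [hwdef, Finset.sum_update_of_mem hq0t, Finset.sdiff_singleton_eq_erase]
      have : ∑ q ∈ t.erase q0, c q = (∑ q ∈ t, c q) - c q0 :=
        (Finset.sum_erase_eq_sub hq0t)
      rw [this, hcsum, hcq0]
      ring
    have hsum_wz : ∑ q ∈ t, w q • z q = p := by
      have heq : ∀ q ∈ t, w q • z q = Function.update (fun q => c q • q) q0 0 q := by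
        intro q hq
        rcases eq_or_ne q q0 with rfl | hne
        · simp [hwdef, hzdef]
        · simp [hwdef, hzdef, Function.update_of_ne hne]
      rw [Finset.sum_congr rfl heq, Finset.sum_update_of_mem hq0t,
        Finset.sdiff_singleton_eq_erase]
      have : ∑ q ∈ t.erase q0, c q • q = (∑ q ∈ t, c q • q) - c q0 • q0 :=
        (Finset.sum_erase_eq_sub hq0t)
      rw [this, hcvec, hcq0, zero_smul, sub_zero, zero_add]
    have hmem : ∑ q ∈ t, w q • z q ∈ convexHull ℝ S0 := by
      apply (convex_convexHull ℝ S0).sum_mem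
      · intro q hq
        rcases eq_or_ne q q0 with rfl | hne
        · simpa [hwdef] using hτ0
        · rw [hwdef, Function.update_of_ne hne]
          exact hc0 q hq
      · exact hsum_w
      · intro q hq
        rcases eq_or_ne q q0 with rfl | hne
        · rw [hzdef, Function.update_self]
          exact subset_convexHull ℝ S0 h0S0
        · rw [hzdef, Function.update_of_ne hne, id]
          exact subset_convexHull ℝ S0 (hqS0 q hq hne)
    rwa [hsum_wz] at hmem
  · -- easy direction
    refine convexHull_min ?_ (hx.inter (convex_convexHull ℝ _))
    intro q hq
    obtain ⟨i, hq⟩ := Set.mem_iUnion.1 hq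
    refine ⟨hq.1, convexHull_mono ?_ hq.2⟩
    exact Set.iUnion_subset fun j => Set.iUnion_subset fun _ => Set.subset_iUnion y j
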